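/- Let d₀, d₁ : ℝ^m → ℝ be convex and define Ψ(θ,y) = inf{(1−y)d₀(θ⁰) + y d₁(θ¹) : (1−y)θ⁰ + yθ¹ = θ} for y ∈ (0,1). If (θ̂⁰, θ̂¹) attains the infimum at (θ,y), v ∈ ∂d₀(θ̂⁰) ∩ ∂d₁(θ̂¹), and w = ⟨v, θ̂⁰⟩ − ⟨v, θ̂¹⟩ + d₁(θ̂¹) − d₀(θ̂⁰), then (v, w) is a subgradient of Ψ at (θ, y): for all (θ', y') in the domain with y' ∈ (0,1), Ψ(θ', y') ≥ Ψ(θ, y) + ⟨v, θ' − θ⟩ + w(y' − y). -/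

import Mathlib

open Set

/-- The subdifferential of `f : ℝ^m → ℝ` at `x` (over the whole space). -/
def subdiff {m : ℕ} (f : EuclideanSpace ℝ (Fin m) → ℝ)
    (x : EuclideanSpace ℝ (Fin m)) : Set (EuclideanSpace ℝ (Fin m)) :=
  {v | ∀ z, f x + (inner ℝ v (z - x) : ℝ) ≤ f z}

/-- The weighted infimal convolution `Ψ(θ, y)`. -/
noncomputable def Psi {m : ℕ} (d₀ d₁ : EuclideanSpace ℝ (Fin m) → ℝ)
    (θ : EuclideanSpace ℝ (Fin m)) (y : ℝ) : ℝ :=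
  sInf {v : ℝ | ∃ θ0 θ1 : EuclideanSpace ℝ (Fin m),
    (1 - y) • θ0 + y • θ1 = θ ∧ v = (1 - y) * d₀ θ0 + y * d₁ θ1}

/-- `(v, w)` with `w = ⟨v,θ̂⁰⟩ − ⟨v,θ̂¹⟩ + d₁(θ̂¹) − d₀(θ̂⁰)` is a
subgradient of `Ψ` at `(θ, y)`. -/
theorem subgradient_of_Psi
    (m : ℕ) (d₀ d₁ : EuclideanSpace ℝ (Fin m) → ℝ)
    (hd₀ : ConvexOn ℝ univ d₀) (hd₁ : ConvexOn ℝ univ d₁)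
    (θ : EuclideanSpace ℝ (Fin m)) (y : ℝ) (hy : y ∈ Ioo (0:ℝ) 1)
    (θ0 θ1 : EuclideanSpace ℝ (Fin m))
    (hconstr : (1 - y) • θ0 + y • θ1 = θ)
    (hattain : Psi d₀ d₁ θ y = (1 - y) * d₀ θ0 + y * d₁ θ1)
    (hmin : ∀ t0 t1 : EuclideanSpace ℝ (Fin m), (1 - y) • t0 + y • t1 = θ →
      (1 - y) * d₀ θ0 + y * d₁ θ1 ≤ (1 - y) * d₀ t0 + y * d₁ t1)
    (v : EuclideanSpace ℝ (Fin m)) (hv : v ∈ subdiff d₀ θ0 ∩ subdiff d₁ θ1)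
    (w : ℝ)
    (hw : w = (inner ℝ v θ0 : ℝ) - (inner ℝ v θ1 : ℝ) + d₁ θ1 - d₀ θ0) :
    ∀ θ' : EuclideanSpace ℝ (Fin m), ∀ y' ∈ Ioo (0:ℝ) 1,
      Psi d₀ d₁ θ y + (inner ℝ v (θ' - θ) : ℝ) + w * (y' - y) ≤ Psi d₀ d₁ θ' y' := by
  intro θ' y' hy'
  obtain ⟨hy'0, hy'1⟩ := hy'
  rw [hattain]
  apply le_csInf
  · exact ⟨(1 - y') * d₀ θ' + y' * d₁ θ', θ', θ', by module, rfl⟩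
  · rintro b ⟨t0, t1, ht, rfl⟩
    have h0 := hv.1 t0
    have h1 := hv.2 t1
    have hip : (1 - y') * (inner ℝ v t0 : ℝ) + y' * (inner ℝ v t1 : ℝ) = (inner ℝ v θ' : ℝ) := by
      rw [← ht]; simp [inner_add_right, real_inner_smul_right, Finset.mul_sum, mul_comm, mul_left_comm, mul_assoc]
    have hip2 : (1 - y) * (inner ℝ v θ0 : ℝ) + y * (inner ℝ v θ1 : ℝ) = (inner ℝ v θ : ℝ) := by
      rw [← hconstr]; simp [inner_add_right, real_inner_smul_right, Finset.mul_sum, mul_comm, mul_left_comm, mul_assoc]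
    have hs1 : (inner ℝ v (t0 - θ0) : ℝ) = inner ℝ v t0 - inner ℝ v θ0 := inner_sub_right _ _ _
    have hs2 : (inner ℝ v (t1 - θ1) : ℝ) = inner ℝ v t1 - inner ℝ v θ1 := inner_sub_right _ _ _
    have hs3 : (inner ℝ v (θ' - θ) : ℝ) = inner ℝ v θ' - inner ℝ v θ := inner_sub_right _ _ _
    subst hw
    nlinarith [mul_le_mul_of_nonneg_left h0 (by linarith : (0:ℝ) ≤ 1 - y'),
               mul_le_mul_of_nonneg_left h1 hy'0.le]
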